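/- For any natural numbers n ≥ 1 and k ≥ 1, the sum over σ in S_n of sign(σ)·(fix(σ))!/(fix(σ)+k)! equals (-1)^(n+1)·(n² + (k-1)n - (k-1)) / ((k-1)!·(n+k-1)·(n+k)). -/

import Mathlib

open intervalIntegral MeasureTheory Matrix

lemma beta_nat (b : ℕ) : ∀ a : ℕ, (∫ x in (0:ℝ)..1, x ^ a * (1 - x) ^ b)
    = (a.factorial * b.factorial : ℝ) / (a + b + 1).factorial := by
  induction b with
  | zero =>
    intro a
    simp only [pow_zero, mul_one, integral_pow, Nat.factorial_zero, Nat.cast_one,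
      Nat.add_zero]
    rw [Nat.factorial_succ]
    push_cast
    rw [one_pow, zero_pow (by omega)]
    have : (a:ℝ) + 1 ≠ 0 := by positivity
    field_simp
    norm_num
  | succ b IH =>
    intro a
    have key := integral_mul_deriv_eq_deriv_mul
      (u := fun x : ℝ => (1 - x) ^ (b + 1)) (u' := fun x : ℝ => -((b + 1) * (1 - x) ^ b))
      (v := fun x : ℝ => x ^ (a + 1) / (a + 1)) (v' := fun x : ℝ => x ^ a)
      (a := (0:ℝ)) (b := 1)
      (fun x _ => by
        have h1 : HasDerivAt (fun x : ℝ => 1 - x) (-1) x := by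
          simpa using (hasDerivAt_id x).const_sub 1
        simpa [mul_comm, mul_assoc, mul_left_comm] using (h1.fun_pow (b + 1))
      )
      (fun x _ => by
        have h2 : HasDerivAt (fun x : ℝ => x ^ (a + 1)) ((a + 1) * x ^ a) x := by
          simpa using hasDerivAt_pow (a + 1) x
        have ha : ((a:ℝ) + 1) ≠ 0 := by positivity
        simpa [mul_div_assoc, mul_div_cancel_left₀, ha] using h2.div_const ((a:ℝ)+1)
      )
      (by apply Continuous.intervalIntegrable; continuity)
      (by apply Continuous.intervalIntegrable; continuity)
    have comm : (∫ x in (0:ℝ)..1, x ^ a * (1 - x) ^ (b+1))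
        = ∫ x in (0:ℝ)..1, (1 - x) ^ (b+1) * x ^ a := by
      apply integral_congr; intro x _; ring
    rw [comm, key]
    have : (∫ x in (0:ℝ)..1, -(((b:ℝ) + 1) * (1 - x) ^ b) * (x ^ (a+1) / (a+1)))
        = -(((b:ℝ)+1)/((a:ℝ)+1)) * ∫ x in (0:ℝ)..1, x ^ (a+1) * (1 - x) ^ b := by
      rw [← intervalIntegral.integral_const_mul]
      apply integral_congr; intro x _; ring
    rw [this, IH (a+1)]
    have ha : ((a:ℝ) + 1) ≠ 0 := by positivity
    have e1 : a + 1 + b + 1 = a + b + 2 := by omega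
    have e2 : a + (b + 1) + 1 = a + b + 2 := by omega
    rw [e1, e2, Nat.factorial_succ (a+b+1), Nat.factorial_succ a, Nat.factorial_succ b,
      sub_self, zero_pow (Nat.succ_ne_zero b), one_pow, zero_pow (Nat.succ_ne_zero a)]
    push_cast
    have hf2 : ((a + b + 1).factorial : ℝ) ≠ 0 := by positivity
    field_simp
    ring

lemma det_sum (m : ℕ) (x : ℝ) :
    (∑ σ : Equiv.Perm (Fin (m+1)), ((Equiv.Perm.sign σ : ℤ) : ℝ) *
      x ^ (Finset.univ.filter fun i => σ i = i).card)
      = (x - 1) ^ m * (x + m) := by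
  have main : ∀ y : ℝ, y ≠ 1 →
      (∑ σ : Equiv.Perm (Fin (m+1)), ((Equiv.Perm.sign σ : ℤ) : ℝ) *
        y ^ (Finset.univ.filter fun i => σ i = i).card)
        = (y - 1) ^ m * (y + m) := by
    intro y hy
    have hy1 : y - 1 ≠ 0 := sub_ne_zero.mpr hy
    set M : Matrix (Fin (m+1)) (Fin (m+1)) ℝ := fun i j => if i = j then y else 1 with hM
    have hdet1 : M.det = ∑ σ : Equiv.Perm (Fin (m+1)), ((Equiv.Perm.sign σ : ℤ) : ℝ) *
        y ^ (Finset.univ.filter fun i => σ i = i).card := by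
      rw [Matrix.det_apply']
      refine Finset.sum_congr rfl fun σ _ => ?_
      congr 1
      have : ∀ i, M (σ i) i = if σ i = i then y else 1 := fun i => rfl
      simp only [this]
      rw [Finset.prod_ite, Finset.prod_const, Finset.prod_const_one, mul_one]
    have hMeq : M = (y - 1) •
        (1 + Matrix.replicateCol Unit (fun _ => (y-1)⁻¹) * Matrix.replicateRow Unit (fun _ => (1:ℝ))) := by
      funext i j
      simp only [hM, Matrix.smul_apply, Matrix.add_apply, Matrix.mul_apply, Matrix.one_apply,
        Matrix.replicateCol_apply, Matrix.replicateRow_apply, Finset.sum_const, Finset.card_univ,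
        Fintype.card_unit, one_smul, smul_eq_mul]
      by_cases h : i = j <;> simp [h, mul_add, mul_inv_cancel₀ hy1]
    have hdet2 : M.det = (y - 1) ^ (m + 1) * (1 + (m + 1) * (y - 1)⁻¹) := by
      rw [hMeq, Matrix.det_smul, Matrix.det_one_add_replicateCol_mul_replicateRow]
      congr 1
      · simp [Fintype.card_fin]
      · simp [dotProduct, Finset.sum_const, Finset.card_univ]
    rw [← hdet1, hdet2]
    field_simp
    ring
  have hc1 : Continuous (fun y : ℝ => ∑ σ : Equiv.Perm (Fin (m+1)),
      ((Equiv.Perm.sign σ : ℤ) : ℝ) * y ^ (Finset.univ.filter fun i => σ i = i).card) := by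
    apply continuous_finset_sum
    exact fun σ _ => continuous_const.mul (continuous_pow _)
  have hc2 : Continuous (fun y : ℝ => (y - 1) ^ m * (y + m)) := by continuity
  have hd : Dense ({(1:ℝ)}ᶜ : Set ℝ) := dense_compl_singleton 1
  have := hc1.ext_on hd hc2 (fun y hy => main y hy)
  exact congrFun this x

theorem integral_identity (n k : ℕ) (hn : 1 ≤ n) (hk : 1 ≤ k) :
    (∑ σ : Equiv.Perm (Fin n),
      ((Equiv.Perm.sign σ : ℤ) : ℚ) *
        ((Finset.univ.filter fun i => σ i = i).card.factorial : ℚ) /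
        (((Finset.univ.filter fun i => σ i = i).card + k).factorial : ℚ))
      = (-1 : ℚ) ^ (n + 1) * ((n : ℚ)^2 + ((k : ℚ) - 1) * n - ((k : ℚ) - 1)) /
          (((k - 1).factorial : ℚ) * ((n : ℚ) + k - 1) * ((n : ℚ) + k)) := by
  obtain ⟨m, rfl⟩ : ∃ m, n = m + 1 := ⟨n - 1, by omega⟩
  obtain ⟨l, rfl⟩ : ∃ l, k = l + 1 := ⟨k - 1, by omega⟩
  rw [show l + 1 - 1 = l from rfl, ← Rat.cast_inj (α := ℝ)]
  push_cast
  set c : Equiv.Perm (Fin (m+1)) → ℕ :=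
    fun σ => (Finset.univ.filter fun i => σ i = i).card with hc
  have hlf : (l.factorial : ℝ) ≠ 0 := by positivity
  have key : ∀ σ : Equiv.Perm (Fin (m+1)),
      ((c σ).factorial : ℝ) / ((c σ + (l+1)).factorial : ℝ)
        = (∫ x in (0:ℝ)..1, x ^ (c σ) * (1-x) ^ l) / l.factorial := by
    intro σ
    rw [beta_nat l (c σ), show c σ + l + 1 = c σ + (l+1) from by omega]
    have h1 : ((c σ + (l+1)).factorial : ℝ) ≠ 0 := by positivity
    field_simp
  have step1 : (∑ σ : Equiv.Perm (Fin (m+1)), ((Equiv.Perm.sign σ : ℤ) : ℝ) *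
        ((c σ).factorial : ℝ) / ((c σ + (l+1)).factorial : ℝ))
      = (∫ x in (0:ℝ)..1, (∑ σ : Equiv.Perm (Fin (m+1)), ((Equiv.Perm.sign σ : ℤ) : ℝ) *
          (x ^ (c σ) * (1-x) ^ l))) / l.factorial := by
    rw [intervalIntegral.integral_finset_sum (fun σ _ => (Continuous.intervalIntegrable (by fun_prop :
        Continuous fun x : ℝ => ((Equiv.Perm.sign σ : ℤ) : ℝ) *
          (x ^ (c σ) * (1-x) ^ l)) 0 1))]
    rw [Finset.sum_div]
    refine Finset.sum_congr rfl fun σ _ => ?_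
    rw [mul_div_assoc, key σ, intervalIntegral.integral_const_mul, mul_div_assoc]
  rw [step1]
  have step2 : (∫ x in (0:ℝ)..1, (∑ σ : Equiv.Perm (Fin (m+1)), ((Equiv.Perm.sign σ : ℤ) : ℝ) *
          (x ^ (c σ) * (1-x) ^ l)))
      = (-1:ℝ)^m * (((m:ℝ)+1) * (((m+l).factorial : ℝ) / ((m+l+1).factorial : ℝ))
          - (((m+l+1).factorial : ℝ) / ((m+l+2).factorial : ℝ))) := by
    have e1 : (∫ x in (0:ℝ)..1, (∑ σ : Equiv.Perm (Fin (m+1)), ((Equiv.Perm.sign σ : ℤ) : ℝ) *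
          (x ^ (c σ) * (1-x) ^ l)))
        = ∫ x in (0:ℝ)..1, (-1:ℝ)^m *
            (((m:ℝ)+1) * (x^(0:ℕ) * (1-x)^(m+l)) - x^(0:ℕ) * (1-x)^(m+l+1)) := by
      apply integral_congr; intro x _
      simp only
      rw [show (∑ σ : Equiv.Perm (Fin (m+1)), ((Equiv.Perm.sign σ : ℤ) : ℝ) *
            (x ^ (c σ) * (1-x) ^ l))
          = (∑ σ : Equiv.Perm (Fin (m+1)), ((Equiv.Perm.sign σ : ℤ) : ℝ) * x ^ (c σ)) * (1-x)^l
          from by rw [Finset.sum_mul]; exact Finset.sum_congr rfl fun σ _ => (mul_assoc _ _ _).symm]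
      rw [hc, det_sum m x, show x - 1 = -(1-x) from by ring, neg_pow]
      ring
    rw [e1, intervalIntegral.integral_const_mul,
      integral_sub
        ((Continuous.intervalIntegrable (by fun_prop) 0 1))
        ((Continuous.intervalIntegrable (by fun_prop) 0 1)),
      intervalIntegral.integral_const_mul, beta_nat (m+l) 0, beta_nat (m+l+1) 0]
    norm_num [show m+l+1+1 = m+l+2 from by omega]
  rw [step2]
  have hA : ((m+l).factorial : ℝ) ≠ 0 := by positivity
  have hB : ((m+l+1).factorial : ℝ) ≠ 0 := by positivity
  have h1 : ((m:ℝ)+l+1) ≠ 0 := by positivity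
  have h2 : ((m:ℝ)+l+2) ≠ 0 := by positivity
  have g1 : ((m+l).factorial : ℝ) / ((m+l+1).factorial : ℝ) = 1/((m:ℝ)+l+1) := by
    rw [Nat.factorial_succ]
    push_cast
    rw [div_eq_div_iff (by positivity) h1]
    ring
  have g2 : ((m+l+1).factorial : ℝ) / ((m+l+2).factorial : ℝ) = 1/((m:ℝ)+l+2) := by
    have f2 : ((m+l+2).factorial : ℝ) = ((m:ℝ)+l+2) * ((m+l+1).factorial : ℝ) := by
      rw [show m+l+2 = (m+l+1)+1 from rfl, Nat.factorial_succ]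
      push_cast
      ring
    rw [f2, div_eq_div_iff (by positivity) h2]
    ring
  rw [g1, g2,
    show ((m:ℝ) + 1 + ((l:ℝ) + 1) - 1) = (m:ℝ)+(l:ℝ)+1 from by ring,
    show ((m:ℝ) + 1 + ((l:ℝ) + 1)) = (m:ℝ)+(l:ℝ)+2 from by ring]
  rw [div_eq_div_iff (by positivity) (by positivity)]
  field_simp
  ring
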